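/- Let X be a second countable compact Hausdorff space and P a Markov operator on C(X) with representing kernel p. If U ⊆ X is an open set that is hereditary for P, then for every x ∈ U there exist an open neighborhood V of x and an open set W containing K = X \ U such that p(V,y) = 0 for all y ∈ W. -/

import Mathlib

open MeasureTheory Topology

/-- The support of a Markov operator given by the kernel `p`. -/
def markovSupp {X : Type*} [TopologicalSpace X] [MeasurableSpace X]
    (p : X → Measure X) : Set (X × X) :=
  {q : X × X | ¬ ∃ U V : Set X, IsOpen U ∧ IsOpen V ∧ q.1 ∈ U ∧ q.2 ∈ V ∧
      ∀ y ∈ V, p y U = 0}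

theorem stmt7 {X : Type*} [TopologicalSpace X] [CompactSpace X] [T2Space X]
    [SecondCountableTopology X] [MeasurableSpace X] [BorelSpace X]
    (p : X → Measure X) (hprob : ∀ y, IsProbabilityMeasure (p y))
    (hcont : ∀ f : C(X, ℂ), Continuous fun y => ∫ x, f x ∂(p y))
    (U : Set X) (hU : IsOpen U)
    (hher : ∀ x y : X, (x, y) ∈ markovSupp p → x ∈ U → y ∈ U) :
    ∀ x ∈ U, ∃ V W : Set X, IsOpen V ∧ x ∈ V ∧ IsOpen W ∧ Uᶜ ⊆ W ∧
      ∀ y ∈ W, p y V = 0 := by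
  intro x hx
  have key : ∀ y ∈ Uᶜ, ∃ V W : Set X, IsOpen V ∧ IsOpen W ∧ x ∈ V ∧ y ∈ W ∧
      ∀ z ∈ W, p z V = 0 := by
    intro y hy
    by_contra h
    exact hy (hher x y h hx)
  choose V W hVopen hWopen hxV hyW hzero using key
  have hcomp : IsCompact Uᶜ := hU.isClosed_compl.isCompact
  obtain ⟨t, ht⟩ := hcomp.elim_finite_subcover (fun i : ↥Uᶜ => W i i.2)
    (fun i => hWopen i i.2)
    (fun y hy => Set.mem_iUnion.2 ⟨⟨y, hy⟩, hyW y hy⟩)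
  refine ⟨⋂ i ∈ t, V i i.2, ⋃ i ∈ t, W i i.2, ?_, ?_, ?_, ?_, ?_⟩
  · exact isOpen_biInter_finset fun i _ => hVopen i i.2
  · exact Set.mem_iInter₂.2 fun i _ => hxV i i.2
  · exact isOpen_biUnion fun i _ => hWopen i i.2
  · exact ht
  · intro y hy
    obtain ⟨i, hi, hyi⟩ := Set.mem_iUnion₂.1 hy
    refine le_antisymm ?_ (zero_le)
    calc p y (⋂ i ∈ t, V i i.2) ≤ p y (V i i.2) :=
          measure_mono (Set.biInter_subset_of_mem hi)
      _ = 0 := hzero i i.2 y hyi
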